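/- Let $T, S \in \mathcal{G}$ and suppose for all $D_n \subset B_n$ with $\#D_n = o(n)$ one has $\lim_n \frac{1}{n}\sum_{e\in D_n}\|Te\|^2 = \lim_n \frac{1}{n}\sum_{e\in D_n}\|Se\|^2 = 0$. Then $\langle T, S\rangle_{\mathcal{G}} = \lim_{n\to\infty}\frac{1}{n}\sum_{e\in B_n}\langle Te, Se\rangle$, and in particular this limit exists. -/

import Mathlib

open Filter Finset MeasureTheory
open scoped ENNReal

noncomputable section

/-- The index set `I = (0,1] ∩ ℚ`. -/
abbrev Iq : Type := {q : ℚ // 0 < q ∧ q ≤ 1}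

/-- The Hilbert space `ℋ² = ⊕_{l ∈ I} H²[-π,π]`, realized via the orthonormal basis
`{e_{lk} : l ∈ I, k ∈ ℕ}` as `ℓ²(I × ℕ)`. -/
abbrev H2 : Type := lp (fun _ : Iq × ℕ => ℂ) 2

/-- The basis vector `e_{lk}` of `ℋ²` (zero if `l ∉ (0,1]`). -/
def basisVec (l : ℚ) (k : ℕ) : H2 :=
  if h : 0 < l ∧ l ≤ 1 then lp.single 2 ((⟨l, h⟩ : Iq), k) (1 : ℂ) else 0

/-- Index set for `Bₙ = {e_{lr} : r = 0,…,⌊n/⌊√n⌋⌋-1, l ∈ I_{⌊√n⌋}}`: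
pairs `(p, r)` with `1 ≤ p ≤ ⌊√n⌋` and `r < ⌊n/⌊√n⌋⌋`, where `l = p/⌊√n⌋`. -/
def Bfin (n : ℕ) : Finset (ℕ × ℕ) :=
  (Finset.Icc 1 (Nat.sqrt n)) ×ˢ (Finset.range (n / Nat.sqrt n))

/-- The basis vector of `Bₙ` indexed by `(p, r)`, namely `e_{p/⌊√n⌋, r}`. -/
def bvec (n : ℕ) (pr : ℕ × ℕ) : H2 :=
  basisVec ((pr.1 : ℚ) / (Nat.sqrt n : ℚ)) pr.2

/-- `∑_{e ∈ C} ‖Te‖²` for a subset `C` of the index set of `Bₙ`. -/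
def sumSq (T : H2 → H2) (n : ℕ) (C : Finset (ℕ × ℕ)) : ℝ :=
  ∑ pr ∈ C, ‖T (bvec n pr)‖ ^ 2

/-- The seminorm `Q(T) = inf { limsup_n (1/√n)(∑_{e ∈ Cₙ} ‖Te‖²)^{1/2} }`, the infimum
over all decompositions `Bₙ = Cₙ ⊔ Dₙ` with `#Dₙ = o(n)`, valued in `ℝ≥0∞`. -/
def QQ (T : H2 → H2) : ℝ≥0∞ :=
  ⨅ (C : ℕ → Finset (ℕ × ℕ)) (_ : ∀ n, C n ⊆ Bfin n)
    (_ : Tendsto (fun n => ((Bfin n \ C n).card : ℝ) / n) atTop (nhds 0)),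
    Filter.limsup (fun n => ENNReal.ofReal (Real.sqrt (sumSq T n (C n) / n))) atTop

/-- `T` acts like the operator `T_{jk}`:
`T(e_{lr}) = e^{2πijl} e_{l,r+k}` when `r + k ≥ 0`, and `0` otherwise. -/
def IsTjk (T : H2 → H2) (j k : ℤ) : Prop :=
  ∀ (l : ℚ) (r : ℕ), T (basisVec l r) =
    if 0 ≤ (r : ℤ) + k then
      Complex.exp (2 * Real.pi * Complex.I * (j : ℂ) * (l : ℂ)) • basisVec l ((r : ℤ) + k).toNat
    else 0

/-- The span `E` of the operators `T_{jk}`, `j,k ∈ ℤ`. -/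
def spanE : Submodule ℂ (H2 →ₗ[ℂ] H2) :=
  Submodule.span ℂ {S : H2 →ₗ[ℂ] H2 | ∃ j k : ℤ, IsTjk ⇑S j k}

/-- `T` belongs to `𝒢`, the `Q`-closure of the span of the `T_{jk}`. -/
def InG (T : H2 →ₗ[ℂ] H2) : Prop :=
  ∀ ε : ℝ≥0∞, 0 < ε → ∃ S ∈ spanE, QQ ⇑(T - S) < ε

/-- `(1/n) ∑_{e ∈ Dₙ} ‖Te‖² → 0` for every choice of `Dₙ ⊆ Bₙ` with `#Dₙ = o(n)`. -/
def NegligibleOn (T : H2 →ₗ[ℂ] H2) : Prop :=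
  ∀ D : ℕ → Finset (ℕ × ℕ), (∀ n, D n ⊆ Bfin n) →
    Tendsto (fun n => ((D n).card : ℝ) / n) atTop (nhds 0) →
    Tendsto (fun n => sumSq ⇑T n (D n) / n) atTop (nhds 0)

/-! ### Auxiliary lemmas -/

lemma norm_single_one (i : Iq × ℕ) : ‖(lp.single 2 i (1:ℂ) : H2)‖ = 1 := by
  have := lp.norm_single (p := (2:ℝ≥0∞)) (E := fun _ : Iq × ℕ => ℂ) (by norm_num)
    i (1:ℂ)
  simpa using this

lemma norm_basisVec_le (l : ℚ) (r : ℕ) : ‖basisVec l r‖ ≤ 1 := by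
  unfold basisVec
  split
  · rw [norm_single_one]
  · simp

lemma inner_single_single (i i' : Iq × ℕ) :
    (inner ℂ (lp.single 2 i' (1:ℂ) : H2) (lp.single 2 i (1:ℂ) : H2) : ℂ) =
      if i' = i then 1 else 0 := by
  rw [lp.inner_single_left]
  rcases eq_or_ne i' i with h | h
  · subst h; rw [lp.single_apply_self]; simp
  · rw [lp.single_apply_ne _ _ _ h]; simp [h]

lemma basisVec_eq (l : ℚ) (h : 0 < l ∧ l ≤ 1) (r : ℕ) :
    basisVec l r = lp.single 2 ((⟨l, h⟩ : Iq), r) 1 := by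
  unfold basisVec; rw [dif_pos h]

lemma inner_basisVec (l : ℚ) (h : 0 < l ∧ l ≤ 1) (a a' : ℕ) :
    (inner ℂ (basisVec l a') (basisVec l a) : ℂ) = if a' = a then 1 else 0 := by
  rw [basisVec_eq l h, basisVec_eq l h, inner_single_single]
  simp [Prod.ext_iff]

/-- Polarization identity in the form we need. -/
lemma polar4 (u v : H2) : (inner ℂ u v : ℂ) =
    (1/4) * ∑ k ∈ Finset.range 4, Complex.I ^ k * ((‖v + Complex.I ^ k • u‖^2 : ℝ) : ℂ) := by
  have h := inner_eq_sum_norm_sq_div_four (𝕜 := ℂ) u v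
  have hI : (RCLike.I : ℂ) = Complex.I := rfl
  rw [hI] at h
  simp only [show ((↑) : ℝ → ℂ) = (RCLike.ofReal : ℝ → ℂ) from rfl]
  have e0 : ‖v + (Complex.I:ℂ)^0 • u‖ = ‖u + v‖ := by
    simp [add_comm]
  have e1 : ‖v + (Complex.I:ℂ)^1 • u‖ = ‖u - Complex.I • v‖ := by
    have : u - Complex.I • v = (-Complex.I) • (v + Complex.I • u) := by
      simp [smul_add, smul_smul, Complex.I_mul_I]; module
    rw [this, norm_smul]; simp
  have e2 : ‖v + (Complex.I:ℂ)^2 • u‖ = ‖u - v‖ := by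
    rw [Complex.I_sq]
    have : v + (-1:ℂ) • u = -(u - v) := by module
    rw [this, norm_neg]
  have e3 : ‖v + (Complex.I:ℂ)^3 • u‖ = ‖u + Complex.I • v‖ := by
    have h3 : (Complex.I:ℂ)^3 = -Complex.I := by
      rw [pow_succ, Complex.I_sq]; ring
    rw [h3]
    have : v + (-Complex.I) • u = (-Complex.I) • (u + Complex.I • v) := by
      simp [smul_add, smul_smul, Complex.I_mul_I]; module
    rw [this, norm_smul]; simp
  rw [Finset.sum_range_succ, Finset.sum_range_succ, Finset.sum_range_succ,
    Finset.sum_range_succ, Finset.range_zero, Finset.sum_empty, e0, e1, e2, e3, h]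
  have h3 : (Complex.I:ℂ)^3 = -Complex.I := by
    rw [pow_succ, Complex.I_sq]; ring
  rw [Complex.I_sq, h3]
  push_cast
  ring_nf

/-! ### The generator computation -/

lemma conj_exp_mul (j j' : ℤ) (l : ℚ) :
    (starRingEnd ℂ) (Complex.exp (2 * Real.pi * Complex.I * (j' : ℂ) * (l : ℂ))) *
      Complex.exp (2 * Real.pi * Complex.I * (j : ℂ) * (l : ℂ)) =
      Complex.exp (2 * Real.pi * Complex.I * ((j : ℂ) - (j' : ℂ)) * (l : ℂ)) := by
  rw [← Complex.exp_conj, ← Complex.exp_add]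
  congr 1
  have : (starRingEnd ℂ) (2 * Real.pi * Complex.I * (j' : ℂ) * (l : ℂ)) =
      -(2 * Real.pi * Complex.I * (j' : ℂ) * (l : ℂ)) := by
    simp only [map_mul, Complex.conj_I, map_ofNat, Complex.conj_ofReal, map_intCast,
      map_ratCast]
    ring
  rw [this]; ring

lemma gen_term (T1 T2 : H2 → H2) (j k j' k' : ℤ) (h1 : IsTjk T1 j k)
    (h2 : IsTjk T2 j' k') (l : ℚ) (hl : 0 < l ∧ l ≤ 1) (r : ℕ) :
    (inner ℂ (T2 (basisVec l r)) (T1 (basisVec l r)) : ℂ) =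
      if k = k' ∧ 0 ≤ (r : ℤ) + k then
        Complex.exp (2 * Real.pi * Complex.I * ((j : ℂ) - (j' : ℂ)) * (l : ℂ)) else 0 := by
  rw [h1 l r, h2 l r]
  by_cases hk : 0 ≤ (r : ℤ) + k
  · by_cases hk' : 0 ≤ (r : ℤ) + k'
    · rw [if_pos hk, if_pos hk', inner_smul_left, inner_smul_right,
        inner_basisVec l hl]
      by_cases hkk : k = k'
      · subst hkk
        rw [if_pos rfl, mul_one, conj_exp_mul, if_pos ⟨rfl, hk⟩]
      · rw [if_neg ?_, mul_zero, mul_zero, if_neg (by tauto)]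
        intro h
        apply hkk
        have h2 := congrArg (fun x : ℕ => (x : ℤ)) h
        simp only [Int.toNat_of_nonneg hk, Int.toNat_of_nonneg hk'] at h2
        omega
    · rw [if_pos hk, if_neg hk', inner_zero_left, if_neg (by
        rintro ⟨rfl, h⟩; exact hk' h)]
  · rw [if_neg hk, inner_zero_right, if_neg (by rintro ⟨rfl, h⟩; exact hk h)]

lemma gen_sum (T1 T2 : H2 → H2) (j k j' k' : ℤ) (h1 : IsTjk T1 j k)
    (h2 : IsTjk T2 j' k') (n : ℕ) :
    ∑ pr ∈ Bfin n, (inner ℂ (T2 (bvec n pr)) (T1 (bvec n pr)) : ℂ) =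
      if k = k' then
        (∑ p ∈ Finset.Icc 1 (Nat.sqrt n),
          Complex.exp (2 * Real.pi * Complex.I * ((j : ℂ) - (j' : ℂ)) *
            ((((p : ℚ) / (Nat.sqrt n : ℚ)) : ℚ) : ℂ)))
          * ((((Finset.range (n / Nat.sqrt n)).filter
              (fun r : ℕ => 0 ≤ (r : ℤ) + k)).card : ℂ))
      else 0 := by
  rw [Bfin, Finset.sum_product]
  have key : ∀ p ∈ Finset.Icc 1 (Nat.sqrt n), ∀ r ∈ Finset.range (n / Nat.sqrt n),
      (inner ℂ (T2 (bvec n (p, r))) (T1 (bvec n (p, r))) : ℂ) =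
        if k = k' ∧ 0 ≤ (r : ℤ) + k then
          Complex.exp (2 * Real.pi * Complex.I * ((j : ℂ) - (j' : ℂ)) *
            ((((p : ℚ) / (Nat.sqrt n : ℚ)) : ℚ) : ℂ)) else 0 := by
    intro p hp r _
    rw [Finset.mem_Icc] at hp
    have hm : 0 < Nat.sqrt n := lt_of_lt_of_le hp.1 hp.2
    have hl : 0 < ((p : ℚ) / (Nat.sqrt n : ℚ)) ∧ ((p : ℚ) / (Nat.sqrt n : ℚ)) ≤ 1 := by
      constructor
      · apply div_pos
        · exact_mod_cast hp.1
        · exact_mod_cast hm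
      · rw [div_le_one (by exact_mod_cast hm)]
        exact_mod_cast hp.2
    exact gen_term T1 T2 j k j' k' h1 h2 _ hl r
  rw [Finset.sum_congr rfl (fun p hp => Finset.sum_congr rfl (fun r hr => key p hp r hr))]
  by_cases hkk : k = k'
  · subst hkk
    simp only [true_and]
    have hrow : ∀ p : ℕ, (∑ r ∈ Finset.range (n / Nat.sqrt n),
        if 0 ≤ (r : ℤ) + k then
          Complex.exp (2 * Real.pi * Complex.I * ((j : ℂ) - (j' : ℂ)) *
            ((((p : ℚ) / (Nat.sqrt n : ℚ)) : ℚ) : ℂ)) else 0) =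
        ((((Finset.range (n / Nat.sqrt n)).filter
            (fun r : ℕ => 0 ≤ (r : ℤ) + k)).card : ℂ)) *
          Complex.exp (2 * Real.pi * Complex.I * ((j : ℂ) - (j' : ℂ)) *
            ((((p : ℚ) / (Nat.sqrt n : ℚ)) : ℚ) : ℂ)) := by
      intro p
      rw [← Finset.sum_filter, Finset.sum_const, nsmul_eq_mul]
    rw [Finset.sum_congr rfl fun p _ => hrow p, ← Finset.mul_sum, mul_comm]
    simp
  · simp [hkk]

lemma gen_psum_zero (d : ℤ) (hd : d ≠ 0) (m : ℕ) (hm : d.natAbs < m) :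
    ∑ p ∈ Finset.Icc 1 m, Complex.exp (2 * Real.pi * Complex.I * (d : ℂ) *
      ((((p : ℚ) / (m : ℚ)) : ℚ) : ℂ)) = 0 := by
  have hm0 : 0 < m := lt_of_le_of_lt (Nat.zero_le _) hm
  have hmC : (m : ℂ) ≠ 0 := Nat.cast_ne_zero.mpr hm0.ne'
  have hc : (2 * (Real.pi : ℂ) * Complex.I) ≠ 0 := by
    simp [Real.pi_ne_zero, Complex.I_ne_zero]
  set z : ℂ := Complex.exp (2 * Real.pi * Complex.I * (d : ℂ) / (m : ℂ)) with hz
  have hterm : ∀ p : ℕ, Complex.exp (2 * Real.pi * Complex.I * (d : ℂ) *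
      ((((p : ℚ) / (m : ℚ)) : ℚ) : ℂ)) = z ^ p := by
    intro p
    rw [hz, ← Complex.exp_nat_mul]
    congr 1
    push_cast
    field_simp
  have hzm : z ^ m = 1 := by
    rw [hz, ← Complex.exp_nat_mul]
    rw [show (m : ℂ) * (2 * Real.pi * Complex.I * (d : ℂ) / (m : ℂ)) =
      (d : ℂ) * (2 * Real.pi * Complex.I) from by field_simp]
    exact Complex.exp_int_mul_two_pi_mul_I d
  have hz1 : z ≠ 1 := by
    intro h
    rw [hz, Complex.exp_eq_one_iff] at h
    obtain ⟨t, ht⟩ := h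
    field_simp at ht
    have h2 : (d : ℂ) = (t : ℂ) * (m : ℂ) := by
      apply mul_left_cancel₀ hc
      linear_combination (2 * (Real.pi : ℂ) * Complex.I) * ht
    have h3 : d = t * (m : ℤ) := by exact_mod_cast h2
    have ht0 : t ≠ 0 := by rintro rfl; simp at h3; exact hd h3
    have h4 : d.natAbs = t.natAbs * m := by
      rw [h3, Int.natAbs_mul, Int.natAbs_natCast]
    have h5 : 1 ≤ t.natAbs := Int.natAbs_pos.mpr ht0
    nlinarith [hm, h4, h5]
  rw [Finset.sum_congr rfl fun p _ => hterm p]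
  rw [show Finset.Icc 1 m = Finset.Ico 1 (m + 1) from by ext x; simp [Nat.lt_succ_iff],
    Finset.sum_Ico_eq_sum_range]
  have : ∀ i ∈ Finset.range (m + 1 - 1), z ^ (1 + i) = z * z ^ i := by
    intro i _
    rw [pow_add, pow_one]
  rw [Finset.sum_congr rfl this, ← Finset.mul_sum]
  simp only [Nat.add_sub_cancel]
  rw [geom_sum_eq hz1, hzm]
  simp

lemma tendsto_nat_sqrt_atTop : Tendsto (fun n : ℕ => Nat.sqrt n) atTop atTop := by
  rw [tendsto_atTop_atTop]
  intro b
  exact ⟨b * b, fun a ha => Nat.le_sqrt.mpr ha⟩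

lemma tendsto_sqrt_div : Tendsto (fun n : ℕ => (Nat.sqrt n : ℝ) / n) atTop (nhds 0) := by
  apply squeeze_zero' (g := fun n : ℕ => 1 / (Nat.sqrt n : ℝ))
  · filter_upwards [eventually_ge_atTop 1] with n hn
    positivity
  · filter_upwards [eventually_ge_atTop 1] with n hn
    have h1 : 0 < Nat.sqrt n := Nat.sqrt_pos.mpr hn
    have h2 : (Nat.sqrt n : ℝ) * (Nat.sqrt n : ℝ) ≤ n := by exact_mod_cast Nat.sqrt_le n
    have hn0 : (0:ℝ) < n := by exact_mod_cast hn
    rw [div_le_div_iff₀ hn0 (by exact_mod_cast h1)]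
    nlinarith
  · exact (tendsto_one_div_atTop_nhds_zero_nat).comp tendsto_nat_sqrt_atTop

lemma tendsto_mcnt (k : ℤ) : Tendsto (fun n : ℕ => ((Nat.sqrt n : ℝ) *
    (((Finset.range (n / Nat.sqrt n)).filter (fun r : ℕ => 0 ≤ (r : ℤ) + k)).card : ℝ)) / n)
    atTop (nhds 1) := by
  set K : ℕ := k.natAbs
  have hcnt : ∀ n : ℕ, (n / Nat.sqrt n) ≤
      ((Finset.range (n / Nat.sqrt n)).filter (fun r : ℕ => 0 ≤ (r : ℤ) + k)).card + K := by
    intro n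
    have hsplit := Finset.card_filter_add_card_filter_not
      (s := Finset.range (n / Nat.sqrt n)) (p := fun r : ℕ => 0 ≤ (r : ℤ) + k)
    have hsub : (Finset.range (n / Nat.sqrt n)).filter (fun r : ℕ => ¬ (0 ≤ (r : ℤ) + k)) ⊆
        Finset.range K := by
      intro r hr
      simp only [Finset.mem_filter, Finset.mem_range, not_le] at hr ⊢
      omega
    have := Finset.card_le_card hsub
    simp only [Finset.card_range] at this hsplit
    omega
  have hcnt2 : ∀ n : ℕ, (((Finset.range (n / Nat.sqrt n)).filter
      (fun r : ℕ => 0 ≤ (r : ℤ) + k)).card) ≤ n / Nat.sqrt n := by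
    intro n
    have h := Finset.card_le_card (Finset.filter_subset
      (fun r : ℕ => 0 ≤ (r : ℤ) + k) (Finset.range (n / Nat.sqrt n)))
    rwa [Finset.card_range] at h
  apply tendsto_of_tendsto_of_tendsto_of_le_of_le'
    (g := fun n : ℕ => 1 - ((K : ℝ) + 2) * ((Nat.sqrt n : ℝ) / n)) (h := fun _ => 1)
  · have : Tendsto (fun n : ℕ => ((K : ℝ) + 2) * ((Nat.sqrt n : ℝ) / n)) atTop (nhds 0) := by
      simpa using tendsto_sqrt_div.const_mul ((K : ℝ) + 2)
    simpa using (tendsto_const_nhds (x := (1:ℝ))).sub this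
  · exact tendsto_const_nhds
  · filter_upwards [eventually_ge_atTop 1] with n hn
    have hm0 : 0 < Nat.sqrt n := Nat.sqrt_pos.mpr hn
    have hn0 : (0:ℝ) < n := by exact_mod_cast hn
    set m := Nat.sqrt n
    set q := n / m
    set c := ((Finset.range q).filter (fun r : ℕ => 0 ≤ (r : ℤ) + k)).card
    have h1 : n < m * q + m := by
      have hdm : m * q + n % m = n := Nat.div_add_mod n m
      have hmod : n % m < m := Nat.mod_lt n hm0
      omega
    have h2 : q ≤ c + K := hcnt n
    have key : (n : ℝ) - (m : ℝ) * ((K : ℝ) + 2) ≤ (m : ℝ) * c := by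
      have hmq : (n : ℝ) ≤ (m : ℝ) * q + m := by exact_mod_cast le_of_lt h1
      have hcq : (q : ℝ) - K ≤ c := by
        have h2' : (q : ℝ) ≤ (c : ℝ) + K := by exact_mod_cast h2
        linarith
      have hm1 : (1:ℝ) ≤ m := by exact_mod_cast hm0
      nlinarith [mul_le_mul_of_nonneg_left hcq (le_trans zero_le_one hm1)]
    have hrew : (1:ℝ) - ((K : ℝ) + 2) * ((m : ℝ) / n) =
        ((n : ℝ) - (m : ℝ) * ((K : ℝ) + 2)) / n := by
      field_simp
    rw [hrew, div_le_div_iff₀ hn0 hn0]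
    nlinarith [key, hn0]
  · filter_upwards [eventually_ge_atTop 1] with n hn
    have hm0 : 0 < Nat.sqrt n := Nat.sqrt_pos.mpr hn
    have hn0 : (0:ℝ) < n := by exact_mod_cast hn
    rw [div_le_one hn0]
    have h1 : Nat.sqrt n * (((Finset.range (n / Nat.sqrt n)).filter
        (fun r : ℕ => 0 ≤ (r : ℤ) + k)).card) ≤ Nat.sqrt n * (n / Nat.sqrt n) :=
      Nat.mul_le_mul_left _ (hcnt2 n)
    have h2 : Nat.sqrt n * (n / Nat.sqrt n) ≤ n := Nat.mul_div_le n (Nat.sqrt n)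
    exact_mod_cast le_trans h1 h2

/-- The quantity whose convergence we study. -/
def ipseq (T S : H2 →ₗ[ℂ] H2) (n : ℕ) : ℂ :=
  (1 / (n : ℂ)) * ∑ pr ∈ Bfin n, (inner ℂ (S (bvec n pr)) (T (bvec n pr)) : ℂ)

lemma gen_limit (T1 T2 : H2 →ₗ[ℂ] H2) (j k j' k' : ℤ) (h1 : IsTjk ⇑T1 j k)
    (h2 : IsTjk ⇑T2 j' k') : ∃ L : ℂ, Tendsto (ipseq T1 T2) atTop (nhds L) := by
  by_cases hkk : k = k'
  · subst hkk
    by_cases hjj : j = j'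
    · subst hjj
      refine ⟨1, ?_⟩
      have hfun : ∀ n : ℕ, ipseq T1 T2 n = ((((Nat.sqrt n : ℝ) *
          (((Finset.range (n / Nat.sqrt n)).filter
            (fun r : ℕ => 0 ≤ (r : ℤ) + k)).card : ℝ)) / n : ℝ) : ℂ) := by
        intro n
        rw [ipseq, gen_sum ⇑T1 ⇑T2 j k j k h1 h2 n, if_pos rfl]
        have : ∀ p ∈ Finset.Icc 1 (Nat.sqrt n),
            Complex.exp (2 * Real.pi * Complex.I * ((j : ℂ) - (j : ℂ)) *
              ((((p : ℚ) / (Nat.sqrt n : ℚ)) : ℚ) : ℂ)) = 1 := by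
          intro p _
          simp
        rw [Finset.sum_congr rfl this, Finset.sum_const, Nat.card_Icc]
        push_cast
        ring
      rw [tendsto_congr hfun]
      have h := (Complex.continuous_ofReal.tendsto 1).comp (tendsto_mcnt k)
      simpa [Function.comp_def] using h
    · refine ⟨0, ?_⟩
      apply Tendsto.congr' _ (tendsto_const_nhds (x := (0:ℂ)))
      have hev : ∀ᶠ n in atTop, (j - j').natAbs < Nat.sqrt n :=
        tendsto_nat_sqrt_atTop.eventually (eventually_gt_atTop ((j - j').natAbs))
      filter_upwards [hev] with n hn
      rw [ipseq, gen_sum ⇑T1 ⇑T2 j k j' k h1 h2 n, if_pos rfl]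
      have hps := gen_psum_zero (j - j') (sub_ne_zero.mpr hjj) (Nat.sqrt n) hn
      have : ∑ p ∈ Finset.Icc 1 (Nat.sqrt n),
          Complex.exp (2 * Real.pi * Complex.I * ((j : ℂ) - (j' : ℂ)) *
            ((((p : ℚ) / (Nat.sqrt n : ℚ)) : ℚ) : ℂ)) = 0 := by
        rw [← hps]
        apply Finset.sum_congr rfl
        intro p _
        push_cast
        ring_nf
      rw [this, zero_mul, mul_zero]
  · refine ⟨0, ?_⟩
    have h0 : ∀ n, ipseq T1 T2 n = 0 := by
      intro n
      rw [ipseq, gen_sum ⇑T1 ⇑T2 j k j' k' h1 h2 n, if_neg hkk, mul_zero]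
    rw [tendsto_congr h0]
    exact tendsto_const_nhds

lemma spanE_limit {T1 T2 : H2 →ₗ[ℂ] H2} (hT1 : T1 ∈ spanE) (hT2 : T2 ∈ spanE) :
    ∃ L : ℂ, Tendsto (ipseq T1 T2) atTop (nhds L) := by
  induction hT1 using Submodule.span_induction with
  | mem x hx =>
      induction hT2 using Submodule.span_induction with
      | mem y hy =>
          obtain ⟨j, k, hjk⟩ := hx
          obtain ⟨j', k', hjk'⟩ := hy
          exact gen_limit x y j k j' k' hjk hjk'
      | zero =>
          refine ⟨0, ?_⟩
          have : ∀ n, ipseq x 0 n = 0 := by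
            intro n; simp [ipseq]
          rw [tendsto_congr this]; exact tendsto_const_nhds
      | add y z _ _ hy hz =>
          obtain ⟨L1, hL1⟩ := hy
          obtain ⟨L2, hL2⟩ := hz
          refine ⟨L1 + L2, ?_⟩
          have : ∀ n, ipseq x (y + z) n = ipseq x y n + ipseq x z n := by
            intro n
            simp only [ipseq, LinearMap.add_apply, inner_add_left, Finset.sum_add_distrib,
              mul_add]
          rw [tendsto_congr this]
          exact hL1.add hL2
      | smul a y _ hy =>
          obtain ⟨L, hL⟩ := hy
          refine ⟨(starRingEnd ℂ) a * L, ?_⟩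
          have : ∀ n, ipseq x (a • y) n = (starRingEnd ℂ) a * ipseq x y n := by
            intro n
            simp only [ipseq, LinearMap.smul_apply, inner_smul_left, ← Finset.mul_sum]
            ring
          rw [tendsto_congr this]
          exact hL.const_mul _
  | zero =>
      refine ⟨0, ?_⟩
      have : ∀ n, ipseq 0 T2 n = 0 := by intro n; simp [ipseq]
      rw [tendsto_congr this]; exact tendsto_const_nhds
  | add y z _ _ hy hz =>
      obtain ⟨L1, hL1⟩ := hy
      obtain ⟨L2, hL2⟩ := hz
      refine ⟨L1 + L2, ?_⟩
      have : ∀ n, ipseq (y + z) T2 n = ipseq y T2 n + ipseq z T2 n := by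
        intro n
        simp only [ipseq, LinearMap.add_apply, inner_add_right, Finset.sum_add_distrib,
          mul_add]
      rw [tendsto_congr this]
      exact hL1.add hL2
  | smul a y _ hy =>
      obtain ⟨L, hL⟩ := hy
      refine ⟨a * L, ?_⟩
      have : ∀ n, ipseq (a • y) T2 n = a * ipseq y T2 n := by
        intro n
        simp only [ipseq, LinearMap.smul_apply, inner_smul_right, ← Finset.mul_sum]
        ring
      rw [tendsto_congr this]
      exact hL.const_mul _

/-! ### Norm bounds and negligibility -/

lemma sumSq_nonneg (T : H2 → H2) (n : ℕ) (C : Finset (ℕ × ℕ)) : 0 ≤ sumSq T n C :=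
  Finset.sum_nonneg fun _ _ => pow_nonneg (norm_nonneg _) 2

lemma sumSq_congr {f g : H2 → H2} (hfg : ∀ e, ‖f e‖ = ‖g e‖) (n : ℕ) (C : Finset (ℕ × ℕ)) :
    sumSq f n C = sumSq g n C :=
  Finset.sum_congr rfl fun pr _ => by rw [hfg]

lemma QQ_congr_norm {f g : H2 → H2} (hfg : ∀ e, ‖f e‖ = ‖g e‖) : QQ f = QQ g := by
  unfold QQ
  simp_rw [sumSq_congr hfg]

lemma minkowski_fin {ι : Type*} (C : Finset ι) (a b : ι → ℝ) :
    Real.sqrt (∑ i ∈ C, (a i + b i)^2) ≤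
      Real.sqrt (∑ i ∈ C, (a i)^2) + Real.sqrt (∑ i ∈ C, (b i)^2) := by
  set A := Real.sqrt (∑ i ∈ C, (a i)^2) with hA
  set B := Real.sqrt (∑ i ∈ C, (b i)^2) with hB
  have hA0 : 0 ≤ A := Real.sqrt_nonneg _
  have hB0 : 0 ≤ B := Real.sqrt_nonneg _
  have hAe : A^2 = ∑ i ∈ C, (a i)^2 := Real.sq_sqrt (Finset.sum_nonneg fun i _ => sq_nonneg _)
  have hBe : B^2 = ∑ i ∈ C, (b i)^2 := Real.sq_sqrt (Finset.sum_nonneg fun i _ => sq_nonneg _)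
  have hab : ∑ i ∈ C, a i * b i ≤ A * B := by
    have hcs := Finset.sum_mul_sq_le_sq_mul_sq C a b
    rcases le_or_gt (∑ i ∈ C, a i * b i) 0 with h0 | h0
    · exact le_trans h0 (mul_nonneg hA0 hB0)
    · nlinarith [hcs, mul_nonneg hA0 hB0]
  have key : ∑ i ∈ C, (a i + b i)^2 ≤ (A + B)^2 := by
    have hpt : ∀ i, (a i + b i)^2 = (a i)^2 + 2 * (a i * b i) + (b i)^2 := fun i => by ring
    rw [Finset.sum_congr rfl fun i _ => hpt i, Finset.sum_add_distrib,
      Finset.sum_add_distrib, ← Finset.mul_sum]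
    nlinarith [hab]
  calc Real.sqrt (∑ i ∈ C, (a i + b i)^2) ≤ Real.sqrt ((A + B)^2) :=
        Real.sqrt_le_sqrt key
    _ = A + B := Real.sqrt_sq (by positivity)

lemma sqrt_sumSq_add_le (f g h : H2 → H2) (hfgh : ∀ e, h e = f e + g e) (n : ℕ)
    (C : Finset (ℕ × ℕ)) :
    Real.sqrt (sumSq h n C) ≤ Real.sqrt (sumSq f n C) + Real.sqrt (sumSq g n C) := by
  have h1 : sumSq h n C ≤ ∑ pr ∈ C, (‖f (bvec n pr)‖ + ‖g (bvec n pr)‖)^2 := by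
    apply Finset.sum_le_sum
    intro pr _
    rw [hfgh]
    exact pow_le_pow_left₀ (norm_nonneg _) (norm_add_le _ _) 2
  calc Real.sqrt (sumSq h n C) ≤
      Real.sqrt (∑ pr ∈ C, (‖f (bvec n pr)‖ + ‖g (bvec n pr)‖)^2) := Real.sqrt_le_sqrt h1
    _ ≤ _ := minkowski_fin C _ _

lemma sqrt_sumSq_div_add_le (f g h : H2 → H2) (hfgh : ∀ e, h e = f e + g e) (n : ℕ)
    (C : Finset (ℕ × ℕ)) :
    Real.sqrt (sumSq h n C / n) ≤
      Real.sqrt (sumSq f n C / n) + Real.sqrt (sumSq g n C / n) := by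
  rw [Real.sqrt_div (sumSq_nonneg _ _ _), Real.sqrt_div (sumSq_nonneg _ _ _),
    Real.sqrt_div (sumSq_nonneg _ _ _), ← add_div, div_eq_mul_inv,
    div_eq_mul_inv]
  exact mul_le_mul_of_nonneg_right (sqrt_sumSq_add_le f g h hfgh n C)
    (inv_nonneg.mpr (Real.sqrt_nonneg _))

lemma sumSq_two_bound (f g h : H2 → H2) (hfgh : ∀ e, h e = f e + g e) (n : ℕ)
    (C : Finset (ℕ × ℕ)) :
    sumSq h n C ≤ 2 * sumSq f n C + 2 * sumSq g n C := by
  rw [sumSq, sumSq, sumSq, Finset.mul_sum, Finset.mul_sum, ← Finset.sum_add_distrib]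
  apply Finset.sum_le_sum
  intro pr _
  rw [hfgh]
  have h1 : ‖f (bvec n pr) + g (bvec n pr)‖ ≤ ‖f (bvec n pr)‖ + ‖g (bvec n pr)‖ :=
    norm_add_le _ _
  nlinarith [norm_nonneg (f (bvec n pr)), norm_nonneg (g (bvec n pr)),
    norm_nonneg (f (bvec n pr) + g (bvec n pr)),
    sq_nonneg (‖f (bvec n pr)‖ - ‖g (bvec n pr)‖)]

lemma negligible_of_add (R S V : H2 →ₗ[ℂ] H2) (hpt : ∀ e, V e = R e + S e)
    (hR : NegligibleOn R) (hS : NegligibleOn S) : NegligibleOn V := by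
  intro D hD hcard
  have h1 := hR D hD hcard
  have h2 := hS D hD hcard
  apply squeeze_zero' (g := fun n => 2 * (sumSq ⇑R n (D n) / n) + 2 * (sumSq ⇑S n (D n) / n))
  · exact Eventually.of_forall fun n =>
      div_nonneg (sumSq_nonneg _ _ _) (Nat.cast_nonneg n)
  · apply Eventually.of_forall
    intro n
    have hbd := sumSq_two_bound ⇑R ⇑S ⇑V hpt n (D n)
    calc sumSq ⇑V n (D n) / n
        ≤ (2 * sumSq ⇑R n (D n) + 2 * sumSq ⇑S n (D n)) / n := by
          rw [div_eq_mul_inv, div_eq_mul_inv]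
          exact mul_le_mul_of_nonneg_right hbd (inv_nonneg.mpr (Nat.cast_nonneg n))
      _ = 2 * (sumSq ⇑R n (D n) / n) + 2 * (sumSq ⇑S n (D n) / n) := by ring
  · simpa using (h1.const_mul 2).add (h2.const_mul 2)

lemma negligible_smul (c : ℂ) (R : H2 →ₗ[ℂ] H2) (hR : NegligibleOn R) :
    NegligibleOn (c • R) := by
  intro D hD hcard
  have h1 := hR D hD hcard
  have heq : ∀ n, sumSq ⇑(c • R) n (D n) = ‖c‖^2 * sumSq ⇑R n (D n) := by
    intro n
    rw [sumSq, sumSq, Finset.mul_sum]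
    apply Finset.sum_congr rfl
    intro pr _
    rw [LinearMap.smul_apply, norm_smul, mul_pow]
  have : (fun n => sumSq ⇑(c • R) n (D n) / n) =
      fun n => ‖c‖^2 * (sumSq ⇑R n (D n) / n) := by
    funext n
    rw [heq n, mul_div_assoc]
  rw [this]
  simpa using h1.const_mul (‖c‖^2)

lemma spanE_bound {R : H2 →ₗ[ℂ] H2} (hR : R ∈ spanE) :
    ∃ K : ℝ, 0 ≤ K ∧ ∀ (l : ℚ) (r : ℕ), ‖R (basisVec l r)‖ ≤ K := by
  induction hR using Submodule.span_induction with
  | mem x hx =>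
      obtain ⟨j, k, hjk⟩ := hx
      refine ⟨1, zero_le_one, fun l r => ?_⟩
      rw [hjk l r]
      split
      · rw [norm_smul]
        have h1 : ‖Complex.exp (2 * Real.pi * Complex.I * (j:ℂ) * (l:ℂ))‖ = 1 := by
          rw [Complex.norm_exp]
          have hre : (2 * (Real.pi:ℂ) * Complex.I * (j:ℂ) * (l:ℂ)).re = 0 := by
            simp [Complex.mul_re, Complex.mul_im]
          rw [hre, Real.exp_zero]
        rw [h1, one_mul]
        exact norm_basisVec_le _ _
      · simp
  | zero => exact ⟨0, le_refl _, by simp⟩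
  | add y z _ _ hy hz =>
      obtain ⟨K1, hK1, h1⟩ := hy
      obtain ⟨K2, hK2, h2⟩ := hz
      refine ⟨K1 + K2, by linarith, fun l r => ?_⟩
      rw [LinearMap.add_apply]
      exact le_trans (norm_add_le _ _) (add_le_add (h1 l r) (h2 l r))
  | smul a y _ hy =>
      obtain ⟨K, hK, h1⟩ := hy
      refine ⟨‖a‖ * K, by positivity, fun l r => ?_⟩
      rw [LinearMap.smul_apply, norm_smul]
      exact mul_le_mul_of_nonneg_left (h1 l r) (norm_nonneg a)

lemma spanE_negligible {R : H2 →ₗ[ℂ] H2} (hR : R ∈ spanE) : NegligibleOn R := by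
  obtain ⟨K, hK0, hK⟩ := spanE_bound hR
  intro D hD hcard
  apply squeeze_zero' (g := fun n => K^2 * (((D n).card : ℝ) / n))
  · exact Eventually.of_forall fun n =>
      div_nonneg (sumSq_nonneg _ _ _) (Nat.cast_nonneg n)
  · apply Eventually.of_forall
    intro n
    have hb : sumSq ⇑R n (D n) ≤ K^2 * (D n).card := by
      rw [sumSq]
      calc ∑ pr ∈ D n, ‖R (bvec n pr)‖^2 ≤ ∑ _pr ∈ D n, K^2 := by
            apply Finset.sum_le_sum
            intro pr _
            exact pow_le_pow_left₀ (norm_nonneg _) (hK _ _) 2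
        _ = K^2 * (D n).card := by rw [Finset.sum_const, nsmul_eq_mul, mul_comm]
    calc sumSq ⇑R n (D n) / n ≤ (K^2 * ((D n).card : ℝ)) / n := by
          rw [div_eq_mul_inv, div_eq_mul_inv]
          exact mul_le_mul_of_nonneg_right hb (inv_nonneg.mpr (Nat.cast_nonneg n))
      _ = K^2 * (((D n).card : ℝ) / n) := by ring
  · simpa using hcard.const_mul (K^2)

/-! ### limsup lemmas in ℝ≥0∞ -/

lemma enn_limsup_add_le (u v : ℕ → ℝ≥0∞) :
    limsup (fun n => u n + v n) atTop ≤ limsup u atTop + limsup v atTop := by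
  by_cases hu : limsup u atTop = ⊤
  · rw [hu]; simp [top_add]
  by_cases hv : limsup v atTop = ⊤
  · rw [hv]; simp [add_top]
  refine ENNReal.le_of_forall_pos_le_add fun ε hε _ => ?_
  have hε2 : ((ε : ℝ≥0∞) / 2) ≠ 0 := by
    simp [ENNReal.div_eq_zero_iff, hε.ne']
  have hu' : ∀ᶠ n in atTop, u n < limsup u atTop + (ε : ℝ≥0∞) / 2 :=
    eventually_lt_of_limsup_lt (ENNReal.lt_add_right hu hε2)
  have hv' : ∀ᶠ n in atTop, v n < limsup v atTop + (ε : ℝ≥0∞) / 2 :=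
    eventually_lt_of_limsup_lt (ENNReal.lt_add_right hv hε2)
  have hb : ∀ᶠ n in atTop, u n + v n ≤ limsup u atTop + limsup v atTop + (ε : ℝ≥0∞) := by
    filter_upwards [hu', hv'] with n h1 h2
    calc u n + v n ≤ (limsup u atTop + (ε : ℝ≥0∞)/2) + (limsup v atTop + (ε : ℝ≥0∞)/2) :=
          add_le_add h1.le h2.le
      _ = limsup u atTop + limsup v atTop + ((ε : ℝ≥0∞)/2 + (ε : ℝ≥0∞)/2) := by ring
      _ = limsup u atTop + limsup v atTop + (ε : ℝ≥0∞) := by rw [ENNReal.add_halves]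
  exact limsup_le_of_le (by isBoundedDefault) hb

/-! ### QQ and the full sequence -/

lemma real_sqrt_add_le {x y : ℝ} (hx : 0 ≤ x) (hy : 0 ≤ y) :
    Real.sqrt (x + y) ≤ Real.sqrt x + Real.sqrt y := by
  have h := Real.sqrt_le_sqrt (show x + y ≤ (Real.sqrt x + Real.sqrt y)^2 by
    nlinarith [Real.sq_sqrt hx, Real.sq_sqrt hy, Real.sqrt_nonneg x, Real.sqrt_nonneg y,
      mul_nonneg (Real.sqrt_nonneg x) (Real.sqrt_nonneg y)])
  rwa [Real.sqrt_sq (by positivity)] at h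

lemma QQ_le_full (R : H2 → H2) :
    QQ R ≤ limsup (fun n => ENNReal.ofReal (Real.sqrt (sumSq R n (Bfin n) / n))) atTop := by
  rw [QQ]
  refine le_trans (iInf_le _ (fun n => Bfin n)) ?_
  refine le_trans (iInf_le _ (fun n => Finset.Subset.refl _)) ?_
  refine le_trans (iInf_le _ ?_) le_rfl
  have : (fun n : ℕ => ((Bfin n \ Bfin n).card : ℝ) / n) = fun _ => 0 := by
    funext n
    simp
  rw [this]
  exact tendsto_const_nhds

lemma full_le_QQ {R : H2 →ₗ[ℂ] H2} (hR : NegligibleOn R) :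
    limsup (fun n => ENNReal.ofReal (Real.sqrt (sumSq ⇑R n (Bfin n) / n))) atTop ≤ QQ ⇑R := by
  rw [QQ]
  refine le_iInf fun C => le_iInf fun hC => le_iInf fun hcard => ?_
  have hD : Tendsto (fun n => sumSq ⇑R n (Bfin n \ C n) / n) atTop (nhds 0) :=
    hR _ (fun n => Finset.sdiff_subset) hcard
  have hsplit : ∀ n, sumSq ⇑R n (Bfin n) =
      sumSq ⇑R n (C n) + sumSq ⇑R n (Bfin n \ C n) := by
    intro n
    rw [sumSq, sumSq, sumSq, add_comm, Finset.sum_sdiff (hC n)]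
  have hpt : ∀ n, ENNReal.ofReal (Real.sqrt (sumSq ⇑R n (Bfin n) / n)) ≤
      ENNReal.ofReal (Real.sqrt (sumSq ⇑R n (C n) / n)) +
        ENNReal.ofReal (Real.sqrt (sumSq ⇑R n (Bfin n \ C n) / n)) := by
    intro n
    refine le_trans (ENNReal.ofReal_le_ofReal ?_) (ENNReal.ofReal_add_le)
    rw [hsplit n, add_div]
    exact real_sqrt_add_le
      (div_nonneg (sumSq_nonneg _ _ _) (Nat.cast_nonneg n))
      (div_nonneg (sumSq_nonneg _ _ _) (Nat.cast_nonneg n))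
  have hDlim : Tendsto (fun n => ENNReal.ofReal (Real.sqrt (sumSq ⇑R n (Bfin n \ C n) / n)))
      atTop (nhds 0) := by
    have h1 : Tendsto (fun n => Real.sqrt (sumSq ⇑R n (Bfin n \ C n) / n)) atTop
        (nhds 0) := by
      have := (Real.continuous_sqrt.tendsto 0).comp hD
      simpa [Function.comp_def] using this
    have := (ENNReal.continuous_ofReal.tendsto 0).comp h1
    simpa [Function.comp_def] using this
  calc limsup (fun n => ENNReal.ofReal (Real.sqrt (sumSq ⇑R n (Bfin n) / n))) atTop
      ≤ limsup (fun n => ENNReal.ofReal (Real.sqrt (sumSq ⇑R n (C n) / n)) +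
          ENNReal.ofReal (Real.sqrt (sumSq ⇑R n (Bfin n \ C n) / n))) atTop :=
        limsup_le_limsup (Eventually.of_forall hpt)
    _ ≤ limsup (fun n => ENNReal.ofReal (Real.sqrt (sumSq ⇑R n (C n) / n))) atTop +
          limsup (fun n => ENNReal.ofReal (Real.sqrt (sumSq ⇑R n (Bfin n \ C n) / n))) atTop :=
        enn_limsup_add_le _ _
    _ = limsup (fun n => ENNReal.ofReal (Real.sqrt (sumSq ⇑R n (C n) / n))) atTop := by
        rw [hDlim.limsup_eq, add_zero]

lemma QQ_eq_limsup {R : H2 →ₗ[ℂ] H2} (hR : NegligibleOn R) :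
    QQ ⇑R = limsup (fun n => ENNReal.ofReal (Real.sqrt (sumSq ⇑R n (Bfin n) / n))) atTop :=
  le_antisymm (QQ_le_full _) (full_le_QQ hR)

/-! ### Convergence of the full sequence for elements of 𝒢 -/

lemma negligible_sub {R S : H2 →ₗ[ℂ] H2} (hR : NegligibleOn R) (hS : NegligibleOn S) :
    NegligibleOn (R - S) :=
  negligible_of_add R ((-1 : ℂ) • S) (R - S)
    (fun e => by simp [sub_eq_add_neg]) hR (negligible_smul _ _ hS)

lemma spanE_diag {S₀ : H2 →ₗ[ℂ] H2} (hS : S₀ ∈ spanE) :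
    ∃ M : ℝ, 0 ≤ M ∧ Tendsto (fun n => sumSq ⇑S₀ n (Bfin n) / n) atTop (nhds M) := by
  obtain ⟨L, hL⟩ := spanE_limit hS hS
  have heq : ∀ n : ℕ, ipseq S₀ S₀ n = ((sumSq ⇑S₀ n (Bfin n) / n : ℝ) : ℂ) := by
    intro n
    rw [ipseq]
    rw [Finset.sum_congr rfl (fun pr _ => (inner_self_eq_norm_sq_to_K (𝕜 := ℂ)
      (S₀ (bvec n pr))))]
    rw [sumSq]
    push_cast
    simp only [show ((↑) : ℝ → ℂ) = (RCLike.ofReal : ℝ → ℂ) from rfl]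
    ring
  rw [tendsto_congr heq] at hL
  have hre := (Complex.continuous_re.tendsto L).comp hL
  have hre' : Tendsto (fun n => sumSq ⇑S₀ n (Bfin n) / n) atTop (nhds L.re) := by
    simpa [Function.comp_def] using hre
  refine ⟨L.re, ?_, hre'⟩
  exact ge_of_tendsto' hre' fun n => div_nonneg (sumSq_nonneg _ _ _) (Nat.cast_nonneg n)

lemma main_conv {R : H2 →ₗ[ℂ] H2} (hG : InG R) (hN : NegligibleOn R) :
    ∃ L : ℝ, 0 ≤ L ∧ Tendsto (fun n => sumSq ⇑R n (Bfin n) / n) atTop (nhds (L^2)) ∧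
      (QQ ⇑R).toReal = L := by
  set f : ℕ → ℝ := fun n => Real.sqrt (sumSq ⇑R n (Bfin n) / n) with hf
  have step1 : ∀ ε : ℝ, 0 < ε → ∃ S₀ : H2 →ₗ[ℂ] H2, S₀ ∈ spanE ∧
      ∀ᶠ n in atTop, |f n - Real.sqrt (sumSq ⇑S₀ n (Bfin n) / n)| < ε := by
    intro ε hε
    obtain ⟨S₀, hS₀mem, hQ⟩ := hG (ENNReal.ofReal ε) (by simpa using hε)
    refine ⟨S₀, hS₀mem, ?_⟩
    have hnegl : NegligibleOn (R - S₀) := negligible_sub hN (spanE_negligible hS₀mem)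
    rw [QQ_eq_limsup hnegl] at hQ
    have hev : ∀ᶠ n in atTop,
        ENNReal.ofReal (Real.sqrt (sumSq ⇑(R - S₀) n (Bfin n) / n)) < ENNReal.ofReal ε :=
      eventually_lt_of_limsup_lt hQ
    filter_upwards [hev] with n hn
    have h1 : Real.sqrt (sumSq ⇑(R - S₀) n (Bfin n) / n) < ε := by
      by_contra hcon
      push_neg at hcon
      exact absurd hn (not_lt.mpr (ENNReal.ofReal_le_ofReal hcon))
    have ha : f n ≤ Real.sqrt (sumSq ⇑(R - S₀) n (Bfin n) / n) +
        Real.sqrt (sumSq ⇑S₀ n (Bfin n) / n) :=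
      sqrt_sumSq_div_add_le ⇑(R - S₀) ⇑S₀ ⇑R (fun e => by simp) n (Bfin n)
    have hb : Real.sqrt (sumSq ⇑S₀ n (Bfin n) / n) ≤
        Real.sqrt (sumSq ⇑(R - S₀) n (Bfin n) / n) + f n := by
      have hcongr : sumSq (fun e => S₀ e - R e) n (Bfin n) =
          sumSq ⇑(R - S₀) n (Bfin n) := by
        apply sumSq_congr
        intro e
        rw [show S₀ e - R e = -((R - S₀) e) from by simp, norm_neg]
      have := sqrt_sumSq_div_add_le (fun e => S₀ e - R e) ⇑R ⇑S₀
        (fun e => by simp) n (Bfin n)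
      rwa [hcongr] at this
    rw [abs_sub_lt_iff]
    constructor <;> [skip; skip] <;>
      first
        | (have := Real.sqrt_nonneg (sumSq ⇑(R - S₀) n (Bfin n) / n); linarith)
  have hca : CauchySeq f := by
    rw [Metric.cauchySeq_iff]
    intro ε hε
    obtain ⟨S₀, hS₀mem, hev⟩ := step1 (ε/4) (by linarith)
    obtain ⟨M, _, hMlim⟩ := spanE_diag hS₀mem
    have hS₀lim : Tendsto (fun n => Real.sqrt (sumSq ⇑S₀ n (Bfin n) / n)) atTop
        (nhds (Real.sqrt M)) := by
      have := (Real.continuous_sqrt.tendsto M).comp hMlim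
      simpa [Function.comp_def] using this
    have hScauchy := hS₀lim.cauchySeq
    rw [Metric.cauchySeq_iff] at hScauchy
    obtain ⟨N1, hN1⟩ := hScauchy (ε/4) (by linarith)
    obtain ⟨N2, hN2⟩ := eventually_atTop.mp hev
    refine ⟨max N1 N2, fun m hm n hn => ?_⟩
    have d1 := hN1 m (le_trans (le_max_left _ _) hm) n (le_trans (le_max_left _ _) hn)
    have d2 := hN2 m (le_trans (le_max_right _ _) hm)
    have d3 := hN2 n (le_trans (le_max_right _ _) hn)
    rw [Real.dist_eq] at d1 ⊢
    have e2 := abs_sub_lt_iff.mp d2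
    have e3 := abs_sub_lt_iff.mp d3
    have e1 := abs_sub_lt_iff.mp d1
    rw [abs_sub_lt_iff]
    constructor <;> linarith [e1.1, e1.2, e2.1, e2.2, e3.1, e3.2]
  obtain ⟨L, hL⟩ := cauchySeq_tendsto_of_complete hca
  have hL0 : 0 ≤ L := ge_of_tendsto' hL fun n => Real.sqrt_nonneg _
  have hlim2 : Tendsto (fun n => ENNReal.ofReal (f n)) atTop (nhds (ENNReal.ofReal L)) := by
    have := (ENNReal.continuous_ofReal.tendsto L).comp hL
    simpa [Function.comp_def] using this
  have hQR : QQ ⇑R = ENNReal.ofReal L := by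
    rw [QQ_eq_limsup hN]
    exact hlim2.limsup_eq
  refine ⟨L, hL0, ?_, by rw [hQR, ENNReal.toReal_ofReal hL0]⟩
  have hsq : ∀ n, sumSq ⇑R n (Bfin n) / n = (f n)^2 := fun n =>
    (Real.sq_sqrt (div_nonneg (sumSq_nonneg _ _ _) (Nat.cast_nonneg n))).symm
  rw [tendsto_congr hsq]
  exact hL.pow 2

/-! ### Subadditivity of QQ -/

lemma QQ_add_le (f g h : H2 → H2) (hfgh : ∀ e, h e = f e + g e) :
    QQ h ≤ QQ f + QQ g := by
  by_cases hf : QQ f = ⊤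
  · rw [hf]; simp [top_add]
  by_cases hg : QQ g = ⊤
  · rw [hg]; simp [add_top]
  refine ENNReal.le_of_forall_pos_le_add fun ε hε _ => ?_
  have hε2 : ((ε : ℝ≥0∞) / 2) ≠ 0 := by
    simp [ENNReal.div_eq_zero_iff, hε.ne']
  have h1 : QQ f < QQ f + (ε : ℝ≥0∞)/2 := ENNReal.lt_add_right hf hε2
  have h2 : QQ g < QQ g + (ε : ℝ≥0∞)/2 := ENNReal.lt_add_right hg hε2
  rw [QQ, iInf_lt_iff] at h1 h2
  obtain ⟨C1, h1⟩ := h1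
  rw [iInf_lt_iff] at h1
  obtain ⟨hC1sub, h1⟩ := h1
  rw [iInf_lt_iff] at h1
  obtain ⟨hC1card, hLf⟩ := h1
  obtain ⟨C2, h2⟩ := h2
  rw [iInf_lt_iff] at h2
  obtain ⟨hC2sub, h2⟩ := h2
  rw [iInf_lt_iff] at h2
  obtain ⟨hC2card, hLg⟩ := h2
  set C : ℕ → Finset (ℕ × ℕ) := fun n => C1 n ∩ C2 n with hC
  have hCsub : ∀ n, C n ⊆ Bfin n := fun n =>
    le_trans (Finset.inter_subset_left) (hC1sub n)
  have hCcard : Tendsto (fun n => ((Bfin n \ C n).card : ℝ) / n) atTop (nhds 0) := by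
    apply squeeze_zero' (g := fun n => ((Bfin n \ C1 n).card : ℝ) / n +
        ((Bfin n \ C2 n).card : ℝ) / n)
    · exact Eventually.of_forall fun n => div_nonneg (Nat.cast_nonneg _) (Nat.cast_nonneg _)
    · apply Eventually.of_forall
      intro n
      have hun : Bfin n \ C n = (Bfin n \ C1 n) ∪ (Bfin n \ C2 n) :=
        Finset.sdiff_inter_distrib_right _ _ _
      have hcard : ((Bfin n \ C n).card : ℝ) ≤
          ((Bfin n \ C1 n).card : ℝ) + ((Bfin n \ C2 n).card : ℝ) := by
        rw [hun]
        exact_mod_cast Finset.card_union_le _ _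
      rw [← add_div, div_eq_mul_inv, div_eq_mul_inv]
      exact mul_le_mul_of_nonneg_right hcard (inv_nonneg.mpr (Nat.cast_nonneg n))
    · simpa using hC1card.add hC2card
  have hpt : ∀ n, ENNReal.ofReal (Real.sqrt (sumSq h n (C n) / n)) ≤
      ENNReal.ofReal (Real.sqrt (sumSq f n (C1 n) / n)) +
        ENNReal.ofReal (Real.sqrt (sumSq g n (C2 n) / n)) := by
    intro n
    have hmono1 : sumSq f n (C n) ≤ sumSq f n (C1 n) :=
      Finset.sum_le_sum_of_subset_of_nonneg Finset.inter_subset_left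
        (fun _ _ _ => pow_nonneg (norm_nonneg _) 2)
    have hmono2 : sumSq g n (C n) ≤ sumSq g n (C2 n) :=
      Finset.sum_le_sum_of_subset_of_nonneg Finset.inter_subset_right
        (fun _ _ _ => pow_nonneg (norm_nonneg _) 2)
    have hmink := sqrt_sumSq_div_add_le f g h hfgh n (C n)
    have hstep : Real.sqrt (sumSq h n (C n) / n) ≤
        Real.sqrt (sumSq f n (C1 n) / n) + Real.sqrt (sumSq g n (C2 n) / n) := by
      refine le_trans hmink (add_le_add ?_ ?_) <;>
        · apply Real.sqrt_le_sqrt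
          rw [div_eq_mul_inv, div_eq_mul_inv]
          first
            | exact mul_le_mul_of_nonneg_right hmono1 (inv_nonneg.mpr (Nat.cast_nonneg n))
            | exact mul_le_mul_of_nonneg_right hmono2 (inv_nonneg.mpr (Nat.cast_nonneg n))
    exact le_trans (ENNReal.ofReal_le_ofReal hstep) ENNReal.ofReal_add_le
  have hQh : QQ h ≤ limsup (fun n => ENNReal.ofReal (Real.sqrt (sumSq h n (C n) / n))) atTop := by
    rw [QQ]
    refine le_trans (iInf_le _ C) (le_trans (iInf_le _ hCsub) (iInf_le _ hCcard))
  calc QQ h ≤ limsup (fun n => ENNReal.ofReal (Real.sqrt (sumSq h n (C n) / n))) atTop := hQh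
    _ ≤ limsup (fun n => ENNReal.ofReal (Real.sqrt (sumSq f n (C1 n) / n)) +
          ENNReal.ofReal (Real.sqrt (sumSq g n (C2 n) / n))) atTop :=
        limsup_le_limsup (Eventually.of_forall hpt)
    _ ≤ limsup (fun n => ENNReal.ofReal (Real.sqrt (sumSq f n (C1 n) / n))) atTop +
          limsup (fun n => ENNReal.ofReal (Real.sqrt (sumSq g n (C2 n) / n))) atTop :=
        enn_limsup_add_le _ _
    _ ≤ (QQ f + (ε : ℝ≥0∞)/2) + (QQ g + (ε : ℝ≥0∞)/2) := add_le_add hLf.le hLg.le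
    _ = QQ f + QQ g + ((ε : ℝ≥0∞)/2 + (ε : ℝ≥0∞)/2) := by ring
    _ = QQ f + QQ g + (ε : ℝ≥0∞) := by rw [ENNReal.add_halves]

lemma InG_comb {T S : H2 →ₗ[ℂ] H2} (hT : InG T) (hS : InG S) (c : ℂ) (hc : ‖c‖ = 1) :
    InG (T + c • S) := by
  intro ε hε
  obtain ⟨S₁, h1m, h1⟩ := hT (ε/2) (ENNReal.half_pos hε.ne')
  obtain ⟨S₂, h2m, h2⟩ := hS (ε/2) (ENNReal.half_pos hε.ne')
  refine ⟨S₁ + c • S₂, Submodule.add_mem _ h1m (Submodule.smul_mem _ _ h2m), ?_⟩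
  have hpt : ∀ e, (⇑(T + c • S - (S₁ + c • S₂))) e =
      (⇑(T - S₁)) e + ((fun x => c • ((⇑(S - S₂)) x)) e) := by
    intro e
    simp only [LinearMap.sub_apply, LinearMap.add_apply, LinearMap.smul_apply]
    rw [smul_sub]
    abel
  have hQ1 := QQ_add_le ⇑(T - S₁) (fun x => c • ((⇑(S - S₂)) x)) _ hpt
  have hQ2 : QQ (fun x => c • ((⇑(S - S₂)) x)) = QQ ⇑(S - S₂) :=
    QQ_congr_norm fun e => by rw [norm_smul, hc, one_mul]
  calc QQ ⇑(T + c • S - (S₁ + c • S₂)) ≤ QQ ⇑(T - S₁) + QQ ⇑(S - S₂) := by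
        rw [← hQ2]; exact hQ1
    _ < ε/2 + ε/2 := ENNReal.add_lt_add h1 h2
    _ = ε := ENNReal.add_halves ε

/-! ### Main theorem -/

/-- For `T, S ∈ 𝒢` whose basis norms are negligible on `o(n)`-subsets of `Bₙ`, the limit
`lim_n (1/n) ∑_{e ∈ Bₙ} ⟨Te, Se⟩` exists and equals the inner product `⟨T,S⟩_𝒢` induced via the
polarization identity `⟨T,S⟩_𝒢 = (1/4) ∑_{k=0}^{3} i^k Q̃(T + i^k S)²` from the norm `Q̃` on `𝒢`.
(Here `⟨·,·⟩` is linear in the first argument, so `⟨Te,Se⟩ = inner (S e) (T e)` in Mathlib's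
convention.) -/
theorem inner_G_eq_limit (T S : H2 →ₗ[ℂ] H2) (hTG : InG T) (hSG : InG S)
    (hTD : NegligibleOn T) (hSD : NegligibleOn S) :
    Filter.Tendsto
      (fun n : ℕ => (1 / (n : ℂ)) * ∑ pr ∈ Bfin n,
        (inner ℂ (S (bvec n pr)) (T (bvec n pr)) : ℂ))
      atTop
      (nhds ((1 / 4) * ∑ k ∈ Finset.range 4,
        Complex.I ^ k * (((QQ ⇑(T + Complex.I ^ k • S)).toReal ^ 2 : ℝ) : ℂ))) := by
  have key : ∀ k : ℕ, ∃ L : ℝ, 0 ≤ L ∧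
      Tendsto (fun n => sumSq ⇑(T + Complex.I ^ k • S) n (Bfin n) / n) atTop (nhds (L^2)) ∧
      (QQ ⇑(T + Complex.I ^ k • S)).toReal = L := by
    intro k
    apply main_conv
    · exact InG_comb hTG hSG _ (by simp)
    · exact negligible_of_add T (Complex.I ^ k • S) _ (fun e => by simp) hTD
        (negligible_smul _ _ hSD)
  have hfun : ∀ n : ℕ, (1 / (n : ℂ)) * ∑ pr ∈ Bfin n,
      (inner ℂ (S (bvec n pr)) (T (bvec n pr)) : ℂ) =
      (1/4) * ∑ k ∈ Finset.range 4, Complex.I ^ k *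
        ((sumSq ⇑(T + Complex.I ^ k • S) n (Bfin n) / n : ℝ) : ℂ) := by
    intro n
    have hs : ∀ k ∈ Finset.range 4, Complex.I ^ k *
        ((sumSq ⇑(T + Complex.I ^ k • S) n (Bfin n) / n : ℝ) : ℂ) =
        ∑ pr ∈ Bfin n, (1/(n:ℂ)) * (Complex.I ^ k *
          ((‖T (bvec n pr) + Complex.I ^ k • S (bvec n pr)‖^2 : ℝ) : ℂ)) := by
      intro k _
      rw [sumSq]
      simp only [LinearMap.add_apply, LinearMap.smul_apply]
      push_cast
      rw [Finset.sum_div, Finset.mul_sum]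
      apply Finset.sum_congr rfl
      intro pr _
      ring
    rw [Finset.sum_congr rfl hs, Finset.sum_comm,
      Finset.sum_congr rfl (fun pr _ => polar4 (S (bvec n pr)) (T (bvec n pr))),
      Finset.mul_sum, Finset.mul_sum]
    apply Finset.sum_congr rfl
    intro pr _
    simp only [Finset.mul_sum]
    apply Finset.sum_congr rfl
    intro k _
    ring
  rw [tendsto_congr hfun]
  apply Tendsto.const_mul
  apply tendsto_finset_sum
  intro k _
  obtain ⟨L, hL0, hlim, hQ⟩ := key k
  rw [hQ]
  have hcomp := (Complex.continuous_ofReal.tendsto (L^2)).comp hlim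
  exact Tendsto.const_mul _ (by simpa [Function.comp_def] using hcomp)
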